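/- Suppose the equation v0 · v1^m · v2 = w0 · w1^m · w2 holds for two distinct values m = m' and m = m'' with m' < m'', where all words are over a common alphabet and |v1| = |w1| > 0. Then the equation holds for all natural numbers m. -/

import Mathlib

namespace WordEqAux

variable {α : Type*}

lemma repj_succ (v : List α) (n : ℕ) :
    (List.replicate (n+1) v).flatten = v ++ (List.replicate n v).flatten := by
  simp [List.replicate_succ, List.flatten]

lemma repj_add (v : List α) (a b : ℕ) :
    (List.replicate (a+b) v).flatten
      = (List.replicate a v).flatten ++ (List.replicate b v).flatten := by
  induction a with
  | zero => simp
  | succ a ih =>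
      have : a + 1 + b = (a + b) + 1 := by omega
      rw [this, repj_succ, ih, repj_succ, List.append_assoc]

lemma repj_len (v : List α) (n : ℕ) :
    (List.replicate n v).flatten.length = n * v.length := by
  induction n with
  | zero => simp
  | succ n ih => rw [repj_succ, List.length_append, ih]; ring

lemma repj_comm (v : List α) (n : ℕ) :
    v ++ (List.replicate n v).flatten = (List.replicate n v).flatten ++ v := by
  have h1 : (List.replicate (n+1) v).flatten = v ++ (List.replicate n v).flatten :=
    repj_succ v n
  have h2 : (List.replicate (n+1) v).flatten
      = (List.replicate n v).flatten ++ v := by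
    rw [repj_add]; simp [List.flatten]
  rw [← h1, h2]

lemma conj_pow (s p : List α) (d : ℕ) :
    (List.replicate d (s ++ p)).flatten ++ s = s ++ (List.replicate d (p ++ s)).flatten := by
  induction d with
  | zero => simp
  | succ d ih =>
      rw [repj_succ, repj_succ, List.append_assoc, ih, ← List.append_assoc,
        ← List.append_assoc, List.append_assoc s p s]

lemma pow_inj (x y : List α) (d : ℕ) (hd : 0 < d) (hlen : x.length = y.length)
    (h : (List.replicate d x).flatten = (List.replicate d y).flatten) : x = y := by
  obtain ⟨e, rfl⟩ : ∃ e, d = e + 1 := ⟨d - 1, by omega⟩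
  rw [repj_succ, repj_succ] at h
  have h' := congrArg (List.take x.length) h
  rw [List.take_left, hlen, List.take_left] at h'
  exact h'

/-- Key lemma: `v^d ++ s = s ++ w^d` with equal positive block lengths implies
`v ++ s = s ++ w`. -/
lemma key (d : ℕ) (hd : 0 < d) :
    ∀ k (v w s : List α), 0 < v.length → v.length = w.length → s.length = k →
      (List.replicate d v).flatten ++ s = s ++ (List.replicate d w).flatten →
      v ++ s = s ++ w := by
  intro k
  induction k using Nat.strong_induction_on with
  | _ k ih =>
    intro v w s hv hlen hs h
    by_cases hk : k < v.length
    · -- s is a (proper) prefix of v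
      have hsv : s <+: v := by
        have h1 : s <+: (List.replicate d v).flatten ++ s := by
          rw [h]; exact List.prefix_append s _
        have h2 : v <+: (List.replicate d v).flatten ++ s := by
          obtain ⟨e, rfl⟩ : ∃ e, d = e + 1 := ⟨d - 1, by omega⟩
          rw [repj_succ, List.append_assoc]
          exact List.prefix_append v _
        exact List.prefix_of_prefix_length_le h1 h2 (by omega)
      obtain ⟨p, hp⟩ := hsv
      rw [← hp, conj_pow] at h
      have hps : p ++ s = w := by
        refine pow_inj _ _ d hd ?_ (List.append_cancel_left h)
        have := congrArg List.length hp
        simp only [List.length_append] at this ⊢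
        omega
      rw [← hp, List.append_assoc, hps]
    · -- v is a prefix of s
      have hvs : v <+: s := by
        have h1 : v <+: s ++ (List.replicate d w).flatten := by
          rw [← h]
          obtain ⟨e, rfl⟩ : ∃ e, d = e + 1 := ⟨d - 1, by omega⟩
          rw [repj_succ, List.append_assoc]
          exact List.prefix_append v _
        have h2 : s <+: s ++ (List.replicate d w).flatten := List.prefix_append s _
        exact List.prefix_of_prefix_length_le h1 h2 (by omega)
      obtain ⟨s', hs'⟩ := hvs
      have h' : v ++ ((List.replicate d v).flatten ++ s')
          = v ++ (s' ++ (List.replicate d w).flatten) :=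
        calc v ++ ((List.replicate d v).flatten ++ s')
            = (v ++ (List.replicate d v).flatten) ++ s' := by rw [List.append_assoc]
          _ = ((List.replicate d v).flatten ++ v) ++ s' := by rw [repj_comm]
          _ = (List.replicate d v).flatten ++ (v ++ s') := by rw [List.append_assoc]
          _ = (List.replicate d v).flatten ++ s := by rw [hs']
          _ = s ++ (List.replicate d w).flatten := h
          _ = (v ++ s') ++ (List.replicate d w).flatten := by rw [hs']
          _ = v ++ (s' ++ (List.replicate d w).flatten) := by rw [List.append_assoc]
      have hrec := List.append_cancel_left h'
      have hlens' : s'.length = k - v.length := by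
        have := congrArg List.length hs'
        simp only [List.length_append] at this
        omega
      have hstep := ih (k - v.length) (by omega) v w s' hv hlen hlens' hrec
      rw [← hs']
      calc v ++ (v ++ s') = v ++ (s' ++ w) := by rw [hstep]
        _ = (v ++ s') ++ w := by rw [List.append_assoc]

lemma pump (v w s : List α) (hstep : v ++ s = s ++ w) :
    ∀ m, (List.replicate m v).flatten ++ s = s ++ (List.replicate m w).flatten := by
  intro m
  induction m with
  | zero => simp
  | succ m ihm =>
      rw [repj_succ, repj_succ, List.append_assoc, ihm, ← List.append_assoc, hstep,
        List.append_assoc]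

/-- The main theorem under the extra assumption `|v0| ≤ |w0|`. -/
lemma main_aux (v0 v1 v2 w0 w1 w2 : List α) (m' m'' : ℕ)
    (hlt : m' < m'') (hlen : v1.length = w1.length) (hpos : 0 < v1.length)
    (h0 : v0.length ≤ w0.length)
    (h1 : v0 ++ List.flatten (List.replicate m' v1) ++ v2 =
          w0 ++ List.flatten (List.replicate m' w1) ++ w2)
    (h2 : v0 ++ List.flatten (List.replicate m'' v1) ++ v2 =
          w0 ++ List.flatten (List.replicate m'' w1) ++ w2) :
    ∀ m : ℕ, v0 ++ List.flatten (List.replicate m v1) ++ v2 =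
             w0 ++ List.flatten (List.replicate m w1) ++ w2 := by
  -- w0 = v0 ++ s
  have e1 : v0 ++ ((List.replicate m' v1).flatten ++ v2)
      = w0 ++ ((List.replicate m' w1).flatten ++ w2) := by
    simpa [List.append_assoc] using h1
  have hpre : v0 <+: w0 := by
    have p1 : v0 <+: v0 ++ ((List.replicate m' v1).flatten ++ v2) := List.prefix_append _ _
    have p2 : w0 <+: v0 ++ ((List.replicate m' v1).flatten ++ v2) := by
      rw [e1]; exact List.prefix_append _ _
    exact List.prefix_of_prefix_length_le p1 p2 h0
  obtain ⟨s, rfl⟩ := hpre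
  set k := s.length with hk
  -- cancel v0
  simp only [List.append_assoc, List.append_cancel_left_eq] at h1 h2 ⊢
  -- length bookkeeping
  have hL1 := congrArg List.length h1
  simp only [List.length_append, repj_len, ← hlen] at hL1
  have hv2len : v2.length = k + w2.length := by omega
  -- split v2 = t ++ r with r = w2
  have hsplit : v2 = v2.take k ++ v2.drop k := (List.take_append_drop k v2).symm
  set t := v2.take k with ht
  set r := v2.drop k with hr
  have hrlen : r.length = w2.length := by
    rw [hr, List.length_drop]; omega
  rw [hsplit] at h1 h2
  simp only [← List.append_assoc] at h1 h2
  obtain ⟨hP1, hrw⟩ := List.append_inj' h1 hrlen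
  obtain ⟨hP2, -⟩ := List.append_inj' h2 hrlen
  -- derive v1^d ++ s = s ++ w1^d with d = m'' - m'
  obtain ⟨e, rfl⟩ : ∃ e, m'' = (e + 1) + m' := ⟨m'' - m' - 1, by omega⟩
  set d := e + 1 with hd
  have hQ : (List.replicate d v1).flatten ++ s = s ++ (List.replicate d w1).flatten := by
    have hmain : ((List.replicate d v1).flatten ++ s) ++ (List.replicate m' w1).flatten
        = (s ++ (List.replicate d w1).flatten) ++ (List.replicate m' w1).flatten :=
      calc ((List.replicate d v1).flatten ++ s) ++ (List.replicate m' w1).flatten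
          = (List.replicate d v1).flatten ++ ((List.replicate m' v1).flatten ++ t) := by
            rw [List.append_assoc, ← hP1]
        _ = (List.replicate (d + m') v1).flatten ++ t := by
            rw [repj_add v1 d m', ← List.append_assoc]
        _ = s ++ (List.replicate (d + m') w1).flatten := hP2
        _ = (s ++ (List.replicate d w1).flatten) ++ (List.replicate m' w1).flatten := by
            rw [repj_add w1 d m', ← List.append_assoc]
    exact List.append_cancel_right hmain
  have hstep : v1 ++ s = s ++ w1 :=
    key d (by omega) k v1 w1 s hpos hlen rfl hQ
  have hall := pump v1 w1 s hstep
  -- t = s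
  have hts : t = s := by
    have hm := hall m'
    have h' : (List.replicate m' v1).flatten ++ t = (List.replicate m' v1).flatten ++ s := by
      rw [hP1, ← hm]
    exact List.append_cancel_left h'
  -- conclude
  intro m
  rw [hsplit, hts, hrw, ← List.append_assoc, hall m, List.append_assoc]

end WordEqAux

theorem word_equation_two_solutions_all {α : Type*}
    (v0 v1 v2 w0 w1 w2 : List α) (m' m'' : ℕ)
    (hlt : m' < m'') (hlen : v1.length = w1.length) (hpos : 0 < v1.length)
    (h1 : v0 ++ List.flatten (List.replicate m' v1) ++ v2 =
          w0 ++ List.flatten (List.replicate m' w1) ++ w2)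
    (h2 : v0 ++ List.flatten (List.replicate m'' v1) ++ v2 =
          w0 ++ List.flatten (List.replicate m'' w1) ++ w2) :
    ∀ m : ℕ, v0 ++ List.flatten (List.replicate m v1) ++ v2 =
             w0 ++ List.flatten (List.replicate m w1) ++ w2 := by
  rcases le_total v0.length w0.length with h0 | h0
  · exact WordEqAux.main_aux v0 v1 v2 w0 w1 w2 m' m'' hlt hlen hpos h0 h1 h2
  · intro m
    exact (WordEqAux.main_aux w0 w1 w2 v0 v1 v2 m' m'' hlt hlen.symm
      (hlen ▸ hpos) h0 h1.symm h2.symm m).symm
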